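/- arXiv:1412.4599 — 3 statements merged into one kernel-verified Lean document; each statement's English description precedes it below -/
import Mathlib

section
/- Let G be a finite weakly connected digraph with w(G) > 0. Fix a vertex p and define φ(q) = σ(R(p,q)) mod w(G), where R(p,q) is any route from p to q. Then φ is well-defined (independent of the choice of route) and is a surjective digraph homomorphism from G onto the directed cycle C_{w(G)}. -/
/-- A route in a digraph `(V, E)` starting at a vertex `u` is encoded by a list of
steps `(s, w)` where `s = 1` means the edge is traversed forwards into `w` and
`s = -1` means it is traversed backwards. -/
def IsRoute {V : Type*} (E : V → V → Prop) : V → List (ℤ × V) → Prop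
  | _, [] => True
  | u, (s, w) :: t => ((s = 1 ∧ E u w) ∨ (s = -1 ∧ E w u)) ∧ IsRoute E w t

/-- The final vertex of a route starting at `u` with step list `l`. -/
def routeEnd {V : Type*} : V → List (ℤ × V) → V
  | u, [] => u
  | _, (_, w) :: t => routeEnd w t

/-- The weight `σ(R)` of a route: the sum of its signs. -/
def routeWeight {V : Type*} (l : List (ℤ × V)) : ℤ := (l.map Prod.fst).sum

/-- A digraph homomorphism maps arcs to arcs. -/
def IsDigraphHom {V₁ V₂ : Type*} (E₁ : V₁ → V₁ → Prop) (E₂ : V₂ → V₂ → Prop)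
    (φ : V₁ → V₂) : Prop :=
  ∀ u v, E₁ u v → E₂ (φ u) (φ v)

/-- The set `W` of positive weights of closed routes in the digraph `(V, E)`. -/
def closedWeights {V : Type*} (E : V → V → Prop) : Set ℤ :=
  {n : ℤ | 0 < n ∧ ∃ (u : V) (l : List (ℤ × V)),
    IsRoute E u l ∧ routeEnd u l = u ∧ routeWeight l = n}

/-- `g` is the greatest common divisor of the set `S ⊆ ℤ` (with the convention
`gcd ∅ = 0`). -/
def IsSetGcd (S : Set ℤ) (g : ℤ) : Prop :=
  0 ≤ g ∧ (∀ n ∈ S, g ∣ n) ∧ ∀ d : ℤ, (∀ n ∈ S, d ∣ n) → d ∣ g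

/-- Weak connectedness: any two vertices are joined by a route. -/
def WeaklyConnected {V : Type*} (E : V → V → Prop) : Prop :=
  ∀ u v : V, ∃ l : List (ℤ × V), IsRoute E u l ∧ routeEnd u l = v

/-- Arc relation of the directed cycle `Cₙ` on `ZMod n`. -/
def cycleRel (n : ℕ) : ZMod n → ZMod n → Prop := fun i j => j = i + 1

/-- Arc relation of the directed path with vertex set `Fin n`. -/
def pathRel (n : ℕ) : Fin n → Fin n → Prop := fun i j => (i : ℕ) + 1 = (j : ℕ)

section Aux

variable {V : Type*} (E : V → V → Prop)

lemma routeEnd_append (u : V) (l1 l2 : List (ℤ × V)) :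
    routeEnd u (l1 ++ l2) = routeEnd (routeEnd u l1) l2 := by
  induction l1 generalizing u with
  | nil => rfl
  | cons h t ih => simpa [routeEnd] using ih h.2

lemma routeWeight_append (l1 l2 : List (ℤ × V)) :
    routeWeight (l1 ++ l2) = routeWeight l1 + routeWeight l2 := by
  simp [routeWeight]

lemma routeWeight_cons (s : ℤ) (v : V) (t : List (ℤ × V)) :
    routeWeight ((s, v) :: t) = s + routeWeight t := by
  simp [routeWeight]

lemma isRoute_append (u : V) (l1 l2 : List (ℤ × V)) :
    IsRoute E u (l1 ++ l2) ↔ IsRoute E u l1 ∧ IsRoute E (routeEnd u l1) l2 := by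
  induction l1 generalizing u with
  | nil => simp [IsRoute, routeEnd]
  | cons h t ih =>
    obtain ⟨s, v⟩ := h
    simp only [List.cons_append, IsRoute, routeEnd, List.append_eq, ih v]
    tauto

/-- The reversal of a route. -/
def revSteps : V → List (ℤ × V) → List (ℤ × V)
  | _, [] => []
  | u, (s, v) :: t => revSteps v t ++ [(-s, u)]

lemma revSteps_end (u : V) (l : List (ℤ × V)) :
    routeEnd (routeEnd u l) (revSteps u l) = u := by
  induction l generalizing u with
  | nil => rfl
  | cons h t ih =>
    obtain ⟨s, v⟩ := h
    show routeEnd (routeEnd v t) (revSteps v t ++ [(-s, u)]) = u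
    rw [routeEnd_append, ih v]
    rfl

lemma revSteps_weight (u : V) (l : List (ℤ × V)) :
    routeWeight (revSteps u l) = - routeWeight l := by
  induction l generalizing u with
  | nil => simp [revSteps, routeWeight]
  | cons h t ih =>
    obtain ⟨s, v⟩ := h
    show routeWeight (revSteps v t ++ [(-s, u)]) = _
    rw [routeWeight_append, ih v, routeWeight_cons]
    simp [routeWeight]

lemma revSteps_isRoute (u : V) (l : List (ℤ × V)) (h : IsRoute E u l) :
    IsRoute E (routeEnd u l) (revSteps u l) := by
  induction l generalizing u with
  | nil => trivial
  | cons hd t ih =>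
    obtain ⟨s, v⟩ := hd
    obtain ⟨hstep, ht⟩ := h
    show IsRoute E (routeEnd v t) (revSteps v t ++ [(-s, u)])
    rw [isRoute_append]
    refine ⟨ih v ht, ?_⟩
    rw [revSteps_end]
    refine ⟨?_, trivial⟩
    rcases hstep with ⟨hs, he⟩ | ⟨hs, he⟩
    · exact Or.inr ⟨by rw [hs], he⟩
    · exact Or.inl ⟨by rw [hs]; ring, he⟩

lemma route_signs (u : V) (l : List (ℤ × V)) (h : IsRoute E u l) :
    ∀ x ∈ l, x.1 = 1 ∨ x.1 = -1 := by
  induction l generalizing u with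
  | nil => intro x hx; simp at hx
  | cons hd t ih =>
    obtain ⟨s, v⟩ := hd
    obtain ⟨hstep, ht⟩ := h
    intro x hx
    rcases List.mem_cons.1 hx with rfl | hx
    · rcases hstep with ⟨hs, _⟩ | ⟨hs, _⟩ <;> simp [hs]
    · exact ih v ht x hx

/-- Discrete intermediate value theorem for route prefixes. -/
lemma exists_prefix_weight (l : List (ℤ × V)) (hsig : ∀ x ∈ l, x.1 = 1 ∨ x.1 = -1)
    (k : ℤ) (hk0 : 0 ≤ k) (hkl : k ≤ routeWeight l) :
    ∃ l1 l2, l = l1 ++ l2 ∧ routeWeight l1 = k := by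
  induction l generalizing k with
  | nil =>
    refine ⟨[], [], rfl, ?_⟩
    simp only [routeWeight, List.map_nil, List.sum_nil] at hkl ⊢
    omega
  | cons hd t ih =>
    obtain ⟨s, v⟩ := hd
    rcases eq_or_lt_of_le hk0 with rfl | hk0'
    · exact ⟨[], (s, v) :: t, rfl, by simp [routeWeight]⟩
    rw [routeWeight_cons] at hkl
    have hsig' : ∀ x ∈ t, x.1 = 1 ∨ x.1 = -1 := fun x hx => hsig x (List.mem_cons_of_mem _ hx)
    have hs : s = 1 ∨ s = -1 := hsig (s, v) List.mem_cons_self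
    obtain ⟨l1, l2, hsplit, hw1⟩ := ih hsig' (k - s)
      (by rcases hs with rfl | rfl <;> omega) (by omega)
    exact ⟨(s, v) :: l1, l2, by rw [hsplit]; rfl, by rw [routeWeight_cons, hw1]; ring⟩

end Aux

/-- for a finite weakly connected digraph with `w(G) = w > 0` and a
base vertex `p`, the map `q ↦ σ(R(p,q)) mod w` is well defined and is a surjective
digraph homomorphism onto the directed cycle `C_w`. -/
theorem exists_epimorphism_onto_cycle {V : Type*} [Fintype V] (E : V → V → Prop)
    (hconn : WeaklyConnected E) (w : ℕ) (hw : 0 < w)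
    (hgcd : IsSetGcd (closedWeights E) (w : ℤ)) (p : V) :
    ∃ φ : V → ZMod w,
      (∀ (q : V) (l : List (ℤ × V)), IsRoute E p l → routeEnd p l = q →
        φ q = (routeWeight l : ZMod w)) ∧
      IsDigraphHom E (cycleRel w) φ ∧ Function.Surjective φ := by
  haveI : NeZero w := ⟨hw.ne'⟩
  -- key divisibility: two routes from p to the same endpoint have congruent weights
  have key : ∀ (q : V) (l1 l2 : List (ℤ × V)), IsRoute E p l1 → routeEnd p l1 = q →
      IsRoute E p l2 → routeEnd p l2 = q →
      (w : ℤ) ∣ routeWeight l1 - routeWeight l2 := by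
    intro q l1 l2 h1 he1 h2 he2
    set c : List (ℤ × V) := l1 ++ revSteps p l2 with hc
    have hcr : IsRoute E p c := by
      rw [isRoute_append]
      refine ⟨h1, ?_⟩
      rw [he1, ← he2]
      exact revSteps_isRoute E p l2 h2
    have hce : routeEnd p c = p := by
      rw [routeEnd_append, he1, ← he2, revSteps_end]
    have hcw : routeWeight c = routeWeight l1 - routeWeight l2 := by
      rw [routeWeight_append, revSteps_weight]; ring
    set d := routeWeight l1 - routeWeight l2 with hd
    rcases lt_trichotomy d 0 with hlt | heq | hgt
    · -- reverse the closed route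
      have : -d ∈ closedWeights E := by
        refine ⟨by omega, p, revSteps p c, ?_, ?_, ?_⟩
        · have := revSteps_isRoute E p c hcr
          rwa [hce] at this
        · have := revSteps_end p c
          rwa [hce] at this
        · rw [revSteps_weight, hcw]
      have := hgcd.2.1 _ this
      exact dvd_neg.mp this
    · simp [heq]
    · have : d ∈ closedWeights E := ⟨hgt, p, c, hcr, hce, hcw⟩
      exact hgcd.2.1 _ this
  -- choose routes from p to every vertex
  choose r hr hre using hconn p
  set φ : V → ZMod w := fun q => ((routeWeight (r q) : ℤ) : ZMod w) with hφ
  have hwd : ∀ (q : V) (l : List (ℤ × V)), IsRoute E p l → routeEnd p l = q →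
      φ q = (routeWeight l : ZMod w) := by
    intro q l hl hle
    have hdvd := key q (r q) l (hr q) (hre q) hl hle
    have : ((routeWeight (r q) - routeWeight l : ℤ) : ZMod w) = 0 :=
      (ZMod.intCast_zmod_eq_zero_iff_dvd _ _).2 hdvd
    rw [Int.cast_sub, sub_eq_zero] at this
    exact this
  refine ⟨φ, hwd, ?_, ?_⟩
  · -- homomorphism
    intro u v huv
    have hroute : IsRoute E p (r u ++ [(1, v)]) := by
      rw [isRoute_append, hre]
      exact ⟨hr u, ⟨Or.inl ⟨rfl, huv⟩, trivial⟩⟩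
    have hend : routeEnd p (r u ++ [(1, v)]) = v := by
      rw [routeEnd_append, hre]; rfl
    have := hwd v _ hroute hend
    rw [routeWeight_append] at this
    have hu : φ u = (routeWeight (r u) : ZMod w) := hwd u (r u) (hr u) (hre u)
    show φ v = φ u + 1
    rw [this, hu]
    push_cast
    simp [routeWeight]
  · -- surjectivity
    intro y
    -- closedWeights is nonempty
    have hne : ∃ n, n ∈ closedWeights E := by
      by_contra hcon
      push_neg at hcon
      have := hgcd.2.2 (w + 1) (fun n hn => absurd hn (hcon n))
      have := Int.le_of_dvd (by exact_mod_cast hw) this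
      omega
    obtain ⟨n, hn0, u, c, hcr, hce, hcw⟩ := hne
    have hwn : (w : ℤ) ∣ n := hgcd.2.1 _ ⟨hn0, u, c, hcr, hce, hcw⟩
    have hwle : (w : ℤ) ≤ n := Int.le_of_dvd hn0 hwn
    set t : ZMod w := y - φ u with ht
    set k : ℤ := (t.val : ℤ) with hk
    have hk0 : 0 ≤ k := Int.natCast_nonneg _
    have hklt : k < w := by rw [hk]; exact_mod_cast ZMod.val_lt t
    obtain ⟨l1, l2, hsplit, hw1⟩ := exists_prefix_weight c
      (route_signs E u c hcr) k hk0 (by rw [hcw]; omega)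
    have hl1 : IsRoute E u l1 := by
      rw [hsplit, isRoute_append] at hcr
      exact hcr.1
    set q : V := routeEnd u l1 with hq
    have hroute : IsRoute E p (r u ++ l1) := by
      rw [isRoute_append, hre]
      exact ⟨hr u, hl1⟩
    have hend : routeEnd p (r u ++ l1) = q := by
      rw [routeEnd_append, hre]
    refine ⟨q, ?_⟩
    have := hwd q _ hroute hend
    rw [routeWeight_append, hw1] at this
    have hu : φ u = (routeWeight (r u) : ZMod w) := hwd u (r u) (hr u) (hre u)
    have hkcast : ((k : ℤ) : ZMod w) = t := by
      rw [hk]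
      simp [ZMod.natCast_val, ZMod.cast_id]
    rw [this]
    push_cast
    rw [← hu]
    rw [hkcast, ht]
    ring
end

section
/- Let G be a finite weakly connected digraph with w(G) = 0 (every closed route has weight 0). Then there is a unique epimorphism φ : G → P_{d(G)}, where d(G) is the diameter of G, given by φ(q) = σ(R(p,q)) for a suitable base vertex p; this is well defined independently of the route chosen. -/
namespace RouteAux

variable {V : Type*} {E : V → V → Prop}

theorem isRoute_append {l₁ l₂ : List (ℤ × V)} {u : V} :
    IsRoute E u (l₁ ++ l₂) ↔ IsRoute E u l₁ ∧ IsRoute E (routeEnd u l₁) l₂ := by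
  induction l₁ generalizing u with
  | nil => simp [IsRoute, routeEnd]
  | cons h t ih =>
    obtain ⟨s, w⟩ := h
    simp [IsRoute, routeEnd, ih, and_assoc]

theorem routeEnd_append (l₁ l₂ : List (ℤ × V)) (u : V) :
    routeEnd u (l₁ ++ l₂) = routeEnd (routeEnd u l₁) l₂ := by
  induction l₁ generalizing u with
  | nil => rfl
  | cons h t ih => obtain ⟨s, w⟩ := h; simp [routeEnd, ih]

theorem routeWeight_append (l₁ l₂ : List (ℤ × V)) :
    routeWeight (l₁ ++ l₂) = routeWeight l₁ + routeWeight l₂ := by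
  simp [routeWeight]

/-- The reversed route. -/
def revSteps : V → List (ℤ × V) → List (ℤ × V)
  | _, [] => []
  | u, (s, w) :: t => revSteps w t ++ [(-s, u)]

theorem revSteps_spec : ∀ (l : List (ℤ × V)) (u : V), IsRoute E u l →
    IsRoute E (routeEnd u l) (revSteps u l) ∧
    routeEnd (routeEnd u l) (revSteps u l) = u ∧
    routeWeight (revSteps u l) = - routeWeight l := by
  intro l
  induction l with
  | nil => intro u _; exact ⟨trivial, rfl, by simp [routeWeight, revSteps]⟩
  | cons h t ih =>
    obtain ⟨s, w⟩ := h
    intro u hr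
    obtain ⟨hs, ht⟩ := hr
    obtain ⟨ih1, ih2, ih3⟩ := ih w ht
    have hend : routeEnd u ((s, w) :: t) = routeEnd w t := rfl
    refine ⟨?_, ?_, ?_⟩
    · rw [hend, revSteps, isRoute_append]
      refine ⟨ih1, ?_⟩
      rw [ih2]
      refine ⟨?_, trivial⟩
      rcases hs with ⟨h1, h2⟩ | ⟨h1, h2⟩
      · exact Or.inr ⟨by rw [h1], h2⟩
      · exact Or.inl ⟨by rw [h1]; norm_num, h2⟩
    · rw [hend, revSteps, routeEnd_append, ih2]
      rfl
    · show routeWeight (revSteps w t ++ [(-s, u)]) = -routeWeight ((s, w) :: t)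
      rw [routeWeight_append, ih3]
      simp [routeWeight]

end RouteAux


/-- for a finite weakly connected digraph in which every closed route
has weight `0`, there is a unique epimorphism onto the directed path whose length
is the diameter `d(G)` (the maximal route weight); it is given by
`q ↦ σ(R(p,q))` for a suitable base vertex `p`, independently of the chosen
route. -/
theorem exists_unique_epimorphism_onto_path {V : Type*} [Fintype V] [Nonempty V]
    (E : V → V → Prop) (hconn : WeaklyConnected E)
    (hzero : ∀ (u : V) (l : List (ℤ × V)),
      IsRoute E u l → routeEnd u l = u → routeWeight l = 0)
    (d : ℕ)
    (hd : IsGreatest {n : ℤ | ∃ (u : V) (l : List (ℤ × V)),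
      IsRoute E u l ∧ routeWeight l = n} (d : ℤ)) :
    ∃ (p : V) (φ : V → Fin (d + 1)),
      (∀ (q : V) (l : List (ℤ × V)), IsRoute E p l → routeEnd p l = q →
        ((φ q : ℕ) : ℤ) = routeWeight l) ∧
      IsDigraphHom E (pathRel (d + 1)) φ ∧ Function.Surjective φ ∧
      ∀ φ' : V → Fin (d + 1),
        IsDigraphHom E (pathRel (d + 1)) φ' → Function.Surjective φ' → φ' = φ := by
  classical
  obtain ⟨b⟩ := ‹Nonempty V›
  choose L hL hLe using hconn b
  set f : V → ℤ := fun q => routeWeight (L q) with hf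
  -- any two routes between the same endpoints have the same weight
  have wuniq : ∀ (u v : V) (l₁ l₂ : List (ℤ × V)), IsRoute E u l₁ → routeEnd u l₁ = v →
      IsRoute E u l₂ → routeEnd u l₂ = v → routeWeight l₁ = routeWeight l₂ := by
    intro u v l₁ l₂ h₁ e₁ h₂ e₂
    obtain ⟨hr, he, hw⟩ := RouteAux.revSteps_spec (E := E) l₂ u h₂
    have hroute : IsRoute E u (l₁ ++ RouteAux.revSteps u l₂) := by
      rw [RouteAux.isRoute_append]
      exact ⟨h₁, by rw [e₁, ← e₂]; exact hr⟩
    have hend : routeEnd u (l₁ ++ RouteAux.revSteps u l₂) = u := by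
      rw [RouteAux.routeEnd_append, e₁, ← e₂]; exact he
    have := hzero u _ hroute hend
    rw [RouteAux.routeWeight_append, hw] at this
    omega
  -- the weight of any route is the potential difference
  have fkey : ∀ (u q : V) (l : List (ℤ × V)), IsRoute E u l → routeEnd u l = q →
      routeWeight l = f q - f u := by
    intro u q l hl he
    have hroute : IsRoute E b (L u ++ l) := by
      rw [RouteAux.isRoute_append]
      exact ⟨hL u, by rw [hLe]; exact hl⟩
    have hend : routeEnd b (L u ++ l) = q := by
      rw [RouteAux.routeEnd_append, hLe]; exact he
    have := wuniq b q _ (L q) hroute hend (hL q) (hLe q)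
    rw [RouteAux.routeWeight_append] at this
    simp only [hf]
    omega
  -- base point: minimizer of f
  obtain ⟨p, -, hp⟩ := Finset.exists_min_image Finset.univ f ⟨b, Finset.mem_univ b⟩
  have hp' : ∀ q, f p ≤ f q := fun q => hp q (Finset.mem_univ q)
  have hgd : ∀ q, f q - f p ≤ d := by
    intro q
    obtain ⟨l, hl, he⟩ := hconn p q
    have hw := fkey p q l hl he
    have hmem : routeWeight l ∈ {n : ℤ | ∃ (u : V) (l : List (ℤ × V)),
        IsRoute E u l ∧ routeWeight l = n} := ⟨p, l, hl, rfl⟩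
    have := hd.2 hmem
    omega
  have hdmax : ∃ v, f v - f p = d := by
    obtain ⟨u, l, hl, hw⟩ := hd.1
    refine ⟨routeEnd u l, ?_⟩
    have h0 := fkey u (routeEnd u l) l hl rfl
    have h1 := hp' u
    have h2 := hgd (routeEnd u l)
    omega
  set φ : V → Fin (d + 1) := fun q => ⟨(f q - f p).toNat, by
    have := hp' q; have := hgd q; omega⟩ with hφ
  have hφval : ∀ q, ((φ q : ℕ) : ℤ) = f q - f p := by
    intro q
    have := hp' q
    simp only [hφ]
    omega
  -- discrete intermediate value theorem along routes
  have ivt : ∀ (l : List (ℤ × V)) (u : V), IsRoute E u l → ∀ k : ℤ, f u ≤ k →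
      k ≤ f (routeEnd u l) → ∃ q, f q = k := by
    intro l
    induction l with
    | nil =>
      intro u _ k h1 h2
      exact ⟨u, le_antisymm h1 h2⟩
    | cons h t ih =>
      obtain ⟨s, w⟩ := h
      intro u hr k h1 h2
      obtain ⟨hs, ht⟩ := hr
      rcases eq_or_lt_of_le h1 with heq | hlt
      · exact ⟨u, heq⟩
      · have hw : f w = f u + s := by
          have := fkey u w [(s, w)] ⟨hs, trivial⟩ rfl
          simp [routeWeight] at this
          omega
        have hs1 : s = 1 ∨ s = -1 := by
          rcases hs with ⟨h', -⟩ | ⟨h', -⟩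
          · exact Or.inl h'
          · exact Or.inr h'
        have hwk : f w ≤ k := by rcases hs1 with h' | h' <;> omega
        exact ih w ht k hwk h2
  refine ⟨p, φ, ?_, ?_, ?_, ?_⟩
  · intro q l hl he
    rw [hφval, fkey p q l hl he]
  · intro u v huv
    have hr : IsRoute E u [(1, v)] := ⟨Or.inl ⟨rfl, huv⟩, trivial⟩
    have h0 := fkey u v [(1, v)] hr rfl
    simp [routeWeight] at h0
    have h1 := hφval u
    have h2 := hφval v
    show (φ u : ℕ) + 1 = (φ v : ℕ)
    omega
  · intro k
    obtain ⟨v, hv⟩ := hdmax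
    obtain ⟨l, hl, he⟩ := hconn p v
    have hkd : (k : ℕ) ≤ d := by have := k.isLt; omega
    obtain ⟨q, hq⟩ := ivt l p hl (f p + (k : ℕ)) (by omega) (by rw [he]; omega)
    refine ⟨q, ?_⟩
    have := hφval q
    exact Fin.ext (by omega)
  · intro φ' hhom hsurj
    have step : ∀ (l : List (ℤ × V)) (u : V), IsRoute E u l →
        ((φ' (routeEnd u l) : ℕ) : ℤ) = (φ' u : ℕ) + routeWeight l := by
      intro l
      induction l with
      | nil => intro u _; simp [routeEnd, routeWeight]
      | cons h t ih =>
        obtain ⟨s, w⟩ := h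
        intro u hr
        obtain ⟨hs, ht⟩ := hr
        have h1 : ((φ' w : ℕ) : ℤ) = (φ' u : ℕ) + s := by
          rcases hs with ⟨rfl, he⟩ | ⟨rfl, he⟩
          · have := hhom u w he
            unfold pathRel at this
            omega
          · have := hhom w u he
            unfold pathRel at this
            omega
        have h2 := ih w ht
        have hend : routeEnd u ((s, w) :: t) = routeEnd w t := rfl
        have hwt : routeWeight ((s, w) :: t) = s + routeWeight t := by
          simp [routeWeight]
        rw [hend, hwt]
        omega
    have hp0 : ((φ' p : ℕ) : ℤ) = 0 := by
      obtain ⟨q0, hq0⟩ := hsurj ⟨0, Nat.succ_pos d⟩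
      obtain ⟨l, hl, he⟩ := hconn p q0
      have h1 := step l p hl
      rw [he, hq0] at h1
      have h2 := fkey p q0 l hl he
      have h3 := hp' q0
      simp at h1
      omega
    funext q
    obtain ⟨l, hl, he⟩ := hconn p q
    have h1 := step l p hl
    rw [he] at h1
    have h2 := fkey p q l hl he
    have h3 := hφval q
    exact Fin.ext (by omega)
end

section
/- If ψ : G₁ → G₂ is a surjective digraph homomorphism between finite weakly connected digraphs with w(G₁) > 0 and w(G₂) > 0, then w(G₂) divides w(G₁). -/
lemma isRoute_map {V₁ V₂ : Type*} {E₁ : V₁ → V₁ → Prop} {E₂ : V₂ → V₂ → Prop}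
    {ψ : V₁ → V₂} (hψ : IsDigraphHom E₁ E₂ ψ) :
    ∀ (u : V₁) (l : List (ℤ × V₁)), IsRoute E₁ u l →
      IsRoute E₂ (ψ u) (l.map (fun p => (p.1, ψ p.2)))
  | _, [], _ => trivial
  | u, (s, w) :: t, ⟨h1, h2⟩ =>
    ⟨h1.imp (fun ⟨hs, he⟩ => ⟨hs, hψ _ _ he⟩) (fun ⟨hs, he⟩ => ⟨hs, hψ _ _ he⟩),
      isRoute_map hψ w t h2⟩

lemma routeEnd_map {V₁ V₂ : Type*} (ψ : V₁ → V₂) :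
    ∀ (u : V₁) (l : List (ℤ × V₁)),
      routeEnd (ψ u) (l.map (fun p => (p.1, ψ p.2))) = ψ (routeEnd u l)
  | _, [] => rfl
  | _, (_, w) :: t => routeEnd_map ψ w t

lemma routeWeight_map {V₁ V₂ : Type*} (ψ : V₁ → V₂) (l : List (ℤ × V₁)) :
    routeWeight (l.map (fun p => (p.1, ψ p.2))) = routeWeight l := by
  simp [routeWeight, List.map_map]; rfl

/-- a surjective digraph homomorphism between finite weakly connected
digraphs of positive weights forces `w(G₂) ∣ w(G₁)`. -/
theorem weight_dvd_of_epimorphism {V₁ V₂ : Type*} [Fintype V₁] [Fintype V₂]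
    (E₁ : V₁ → V₁ → Prop) (E₂ : V₂ → V₂ → Prop)
    (hc₁ : WeaklyConnected E₁) (hc₂ : WeaklyConnected E₂)
    (ψ : V₁ → V₂) (hψ : IsDigraphHom E₁ E₂ ψ) (hsurj : Function.Surjective ψ)
    (w₁ w₂ : ℕ) (hw₁ : 0 < w₁) (hw₂ : 0 < w₂)
    (hg₁ : IsSetGcd (closedWeights E₁) (w₁ : ℤ))
    (hg₂ : IsSetGcd (closedWeights E₂) (w₂ : ℤ)) :
    w₂ ∣ w₁ := by
  rw [← Int.natCast_dvd_natCast]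
  apply hg₁.2.2
  intro n hn
  apply hg₂.2.1
  obtain ⟨hpos, u, l, hr, he, hwt⟩ := hn
  exact ⟨hpos, ψ u, l.map (fun p => (p.1, ψ p.2)), isRoute_map hψ u l hr,
    by rw [routeEnd_map, he], by rw [routeWeight_map, hwt]⟩
end
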